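/- Let q ≡ 1 (mod 4) be a prime power, i ∈ F_q with i² = -1, G = PSL(2,q) acting on P = (F_q²\{0})/⟨i⟩, and H the stabilizer of the point [(1,0)]. Then H has exactly (q-1)/2 orbits on P: the (q-1)/4 singleton orbits {[(a,0)]} with a ≠ 0, and the (q-1)/4 orbits {[(y,b)] : y ∈ F_q} for b ≠ 0. -/

import Mathlib

open Matrix MulAction Pointwise

abbrev SL2 (F : Type) [Field F] := Matrix.SpecialLinearGroup (Fin 2) F

abbrev PSL2 (F : Type) [Field F] := SL2 F ⧸ Subgroup.center (SL2 F)

/-- Nonzero vectors of `F²`. -/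
def Vec (F : Type) [Field F] := {v : Fin 2 → F // v ≠ 0}

/-- Two nonzero vectors are related if they differ by multiplication by a power of `i`. -/
def vrel (F : Type) [Field F] (i : F) (v w : Vec F) : Prop :=
  ∃ n : ℕ, (w.1 : Fin 2 → F) = i ^ n • v.1

/-- The point set `P = (F² \ {0})/⟨i⟩`. -/
def Pts (F : Type) [Field F] (i : F) := Quot (vrel F i)

/-- The class of a nonzero vector in `P`. -/
def mkPt (F : Type) [Field F] (i : F) (v : Fin 2 → F) (hv : v ≠ 0) : Pts F i :=
  Quot.mk _ ⟨v, hv⟩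

lemma vec_fst_ne_zero {F : Type} [Field F] (b : F) : ![(1 : F), b] ≠ 0 := by
  intro h
  simpa using congrFun h 0

lemma vec_snd_ne_zero {F : Type} [Field F] (a : F) : ![a, (1 : F)] ≠ 0 := by
  intro h
  simpa using congrFun h 1

/-- `SL(2,q)` acts on nonzero vectors. -/
def slVecSMul {F : Type} [Field F] (A : SL2 F) (v : Vec F) : Vec F :=
  ⟨(A : Matrix (Fin 2) (Fin 2) F) *ᵥ v.1, by
    intro h
    apply v.2
    have h2 : ((A⁻¹ : SL2 F) : Matrix (Fin 2) (Fin 2) F) *ᵥ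
        ((A : Matrix (Fin 2) (Fin 2) F) *ᵥ v.1) = 0 := by rw [h, Matrix.mulVec_zero]
    rwa [Matrix.mulVec_mulVec, ← Matrix.SpecialLinearGroup.coe_mul, inv_mul_cancel,
      Matrix.SpecialLinearGroup.coe_one, Matrix.one_mulVec] at h2⟩

instance (F : Type) [Field F] (i : F) : SMul (SL2 F) (Pts F i) :=
  ⟨fun A => Quot.map (slVecSMul A) (by
    rintro v w ⟨n, hn⟩
    exact ⟨n, by simp [slVecSMul, hn, Matrix.mulVec_smul]⟩)⟩

instance (F : Type) [Field F] (i : F) : MulAction (SL2 F) (Pts F i) where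
  one_smul p := by
    induction p using Quot.ind with | _ v => ?_
    show Quot.mk _ (slVecSMul 1 v) = Quot.mk _ v
    congr 1
    apply Subtype.ext
    simp [slVecSMul]
  mul_smul A B p := by
    induction p using Quot.ind with | _ v => ?_
    show Quot.mk _ (slVecSMul (A * B) v) = Quot.mk _ (slVecSMul A (slVecSMul B v))
    congr 1
    apply Subtype.ext
    simp only [slVecSMul, Matrix.SpecialLinearGroup.coe_mul, Matrix.mulVec_mulVec]

/-- The stabilizer in `PSL(2,q)` of a point of `P`, i.e. the image in the quotient
`PSL(2,q) = SL(2,q)/center` of the stabilizer in `SL(2,q)`. -/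
def pslPtStab (F : Type) [Field F] (i : F) (p : Pts F i) : Subgroup (PSL2 F) :=
  (MulAction.stabilizer (SL2 F) p).map (QuotientGroup.mk' (Subgroup.center (SL2 F)))

/-- The setwise stabilizer in `PSL(2,q)` of a set of points of `P`. -/
def pslSetStab (F : Type) [Field F] (i : F) (s : Set (Pts F i)) : Subgroup (PSL2 F) :=
  (MulAction.stabilizer (SL2 F) s).map (QuotientGroup.mk' (Subgroup.center (SL2 F)))

section Aux

variable {F : Type} [Field F] {i : F}

lemma hi4 (hi : i ^ 2 = -1) : i ^ 4 = 1 := by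
  have h : i ^ 4 = (i ^ 2) ^ 2 := by ring
  rw [h, hi]; ring

lemma i_ne_zero (hi : i ^ 2 = -1) : i ≠ 0 := by
  intro h
  rw [h] at hi
  apply one_ne_zero (α := F)
  have : (0 : F) ^ 2 = 0 := by ring
  rw [this] at hi
  linear_combination hi

lemma vrel_equiv (hi : i ^ 2 = -1) : Equivalence (vrel F i) := by
  constructor
  · intro v; exact ⟨0, by simp⟩
  · rintro v w ⟨n, hn⟩
    refine ⟨3 * n, ?_⟩
    rw [hn, smul_smul, ← pow_add]
    have h : 3 * n + n = 4 * n := by ring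
    rw [h, pow_mul, hi4 hi, one_pow, one_smul]
  · rintro u v w ⟨n, hn⟩ ⟨m, hm⟩
    exact ⟨m + n, by rw [hm, hn, smul_smul, ← pow_add]⟩

lemma mkPt_eq_iff (hi : i ^ 2 = -1) {v w : Fin 2 → F} (hv : v ≠ 0) (hw : w ≠ 0) :
    mkPt F i v hv = mkPt F i w hw ↔ ∃ n : ℕ, w = i ^ n • v := by
  unfold mkPt; refine (Quot.eq (r := vrel F i)).trans ?_
  exact Equivalence.eqvGen_iff (vrel_equiv hi)

lemma mulVec_ne_zero (A : SL2 F) {v : Fin 2 → F} (hv : v ≠ 0) :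
    (A : Matrix (Fin 2) (Fin 2) F) *ᵥ v ≠ 0 := by
  intro h
  apply hv
  have h2 : ((A⁻¹ : SL2 F) : Matrix (Fin 2) (Fin 2) F) *ᵥ
      ((A : Matrix (Fin 2) (Fin 2) F) *ᵥ v) = 0 := by rw [h, Matrix.mulVec_zero]
  rwa [Matrix.mulVec_mulVec, ← Matrix.SpecialLinearGroup.coe_mul, inv_mul_cancel,
    Matrix.SpecialLinearGroup.coe_one, Matrix.one_mulVec] at h2

lemma smul_mkPt (A : SL2 F) {v : Fin 2 → F} (hv : v ≠ 0) :
    A • mkPt F i v hv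
      = mkPt F i ((A : Matrix (Fin 2) (Fin 2) F) *ᵥ v) (mulVec_ne_zero A hv) :=
  rfl

lemma pair_eq_iff {a b c d : F} : ![a, b] = ![c, d] ↔ a = c ∧ b = d := by
  constructor
  · intro h; exact ⟨congrFun h 0, congrFun h 1⟩
  · rintro ⟨rfl, rfl⟩; rfl

lemma smul_pair (c a b : F) : c • ![a, b] = ![c * a, c * b] := by
  simp [Matrix.smul_cons]

lemma mulVec_pair (A : SL2 F) (a b : F) :
    (A : Matrix (Fin 2) (Fin 2) F) *ᵥ ![a, b]
      = ![A 0 0 * a + A 0 1 * b, A 1 0 * a + A 1 1 * b] := by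
  funext j
  fin_cases j <;> simp [Matrix.mulVec, dotProduct, Fin.sum_univ_two]

lemma mem_stab_iff (hi : i ^ 2 = -1) (A : SL2 F) :
    A ∈ MulAction.stabilizer (SL2 F) (mkPt F i ![1, 0] (vec_fst_ne_zero 0)) ↔
    ∃ n : ℕ, A 0 0 = i ^ n ∧ A 1 0 = 0 := by
  rw [MulAction.mem_stabilizer_iff, smul_mkPt, eq_comm,
    mkPt_eq_iff hi, mulVec_pair]
  constructor
  · rintro ⟨n, hn⟩
    rw [smul_pair] at hn
    obtain ⟨h1, h2⟩ := pair_eq_iff.mp hn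
    simp only [mul_one, mul_zero] at h1 h2
    exact ⟨n, by rw [← h1]; ring, by rw [← h2]; ring⟩
  · rintro ⟨n, h1, h2⟩
    refine ⟨n, ?_⟩
    rw [smul_pair, pair_eq_iff]
    constructor <;> simp [h1, h2]

/-- The shear matrix `[[1, x], [0, 1]]` as an element of `SL(2,F)`. -/
def shear (x : F) : SL2 F := ⟨!![1, x; 0, 1], by simp [Matrix.det_fin_two_of]⟩

lemma shear_mem_stab (hi : i ^ 2 = -1) (x : F) :
    shear x ∈ MulAction.stabilizer (SL2 F) (mkPt F i ![1, 0] (vec_fst_ne_zero 0)) := by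
  rw [mem_stab_iff hi]
  exact ⟨0, by simp [shear], by simp [shear]⟩

lemma det_eq_one (A : SL2 F) : A 0 0 * A 1 1 - A 0 1 * A 1 0 = 1 := by
  rw [← Matrix.det_fin_two]
  exact A.2

lemma orbit_zero (hi : i ^ 2 = -1) (a : F) (ha : a ≠ 0) (hv : ![a, 0] ≠ 0) :
    MulAction.orbit (↥(MulAction.stabilizer (SL2 F) (mkPt F i ![1, 0] (vec_fst_ne_zero 0))))
        (mkPt F i ![a, 0] hv) = {mkPt F i ![a, 0] hv} := by
  ext x
  rw [MulAction.mem_orbit_iff, Set.mem_singleton_iff]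
  constructor
  · rintro ⟨⟨A, hA⟩, rfl⟩
    obtain ⟨n, h00, h10⟩ := (mem_stab_iff hi A).mp hA
    show A • mkPt F i ![a, 0] hv = mkPt F i ![a, 0] hv
    rw [smul_mkPt, mkPt_eq_iff hi]
    refine ⟨3 * n, ?_⟩
    rw [mulVec_pair, h00, h10, smul_pair, pair_eq_iff]
    have h4n : i ^ (3 * n) * i ^ n = 1 := by
      rw [← pow_add, show 3 * n + n = 4 * n from by ring, pow_mul, hi4 hi, one_pow]
    constructor
    · -- a = i ^ (3 * n) * (i ^ n * a + A 0 1 * 0)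
      linear_combination -a * h4n
    · ring
  · rintro rfl
    exact ⟨1, one_smul _ _⟩

lemma orbit_line (hi : i ^ 2 = -1) (a b : F) (hb : b ≠ 0) (hv : ![a, b] ≠ 0)
    (p : ∀ y : F, ![y, b] ≠ 0) :
    MulAction.orbit (↥(MulAction.stabilizer (SL2 F) (mkPt F i ![1, 0] (vec_fst_ne_zero 0))))
        (mkPt F i ![a, b] hv) = {x : Pts F i | ∃ y : F, x = mkPt F i ![y, b] (p y)} := by
  ext x
  rw [MulAction.mem_orbit_iff]
  simp only [Set.mem_setOf_eq]
  constructor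
  · rintro ⟨⟨A, hA⟩, rfl⟩
    obtain ⟨n, h00, h10⟩ := (mem_stab_iff hi A).mp hA
    refine ⟨i ^ n * (i ^ n * a + A 0 1 * b), ?_⟩
    show A • mkPt F i ![a, b] hv = _
    rw [smul_mkPt, mkPt_eq_iff hi]
    refine ⟨n, ?_⟩
    rw [mulVec_pair, h00, h10, smul_pair, pair_eq_iff]
    have hdet := det_eq_one A
    rw [h00, h10] at hdet
    constructor
    · ring
    · have h1 : i ^ n * A 1 1 = 1 := by linear_combination hdet
      linear_combination -b * h1
  · rintro ⟨y, rfl⟩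
    refine ⟨⟨shear ((y - a) / b), shear_mem_stab hi _⟩, ?_⟩
    show shear ((y - a) / b) • mkPt F i ![a, b] hv = _
    rw [smul_mkPt, mkPt_eq_iff hi]
    refine ⟨0, ?_⟩
    rw [mulVec_pair, pow_zero, one_smul, pair_eq_iff]
    have e00 : (shear ((y - a) / b)) 0 0 = 1 := rfl
    have e01 : (shear ((y - a) / b)) 0 1 = (y - a) / b := rfl
    have e10 : (shear ((y - a) / b)) 1 0 = 0 := rfl
    have e11 : (shear ((y - a) / b)) 1 1 = 1 := rfl
    rw [e00, e01, e10, e11]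
    constructor
    · field_simp; ring
    · ring

lemma card_range_eq_index {G : Type} [Group G] (H : Subgroup G) {β : Type} (f : G → β)
    (hf : ∀ u u' : G, f u = f u' ↔ u⁻¹ * u' ∈ H) :
    Nat.card (Set.range f) = H.index := by
  have key : ∀ u u' : G, (QuotientGroup.mk u : G ⧸ H) = QuotientGroup.mk u' ↔ f u = f u' := by
    intro u u'
    rw [hf, QuotientGroup.eq]
  let g : G ⧸ H → β := fun x => f x.out
  have hg : ∀ u : G, g (QuotientGroup.mk u) = f u := fun u =>
    (key _ _).mp (QuotientGroup.out_eq' _)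
  have hrange : Set.range g = Set.range f := by
    ext b
    constructor
    · rintro ⟨x, rfl⟩; exact ⟨x.out, rfl⟩
    · rintro ⟨u, rfl⟩; exact ⟨QuotientGroup.mk u, hg u⟩
  have hinj : Function.Injective g := by
    intro x y h
    obtain ⟨u, rfl⟩ := QuotientGroup.mk_surjective x
    obtain ⟨u', rfl⟩ := QuotientGroup.mk_surjective y
    rw [hg, hg] at h
    exact (key u u').mpr h
  rw [← hrange, Nat.card_range_of_injective hinj, Subgroup.index_eq_card]

end Aux

/-- The stabilizer `H` of `[(1,0)]` has exactly `(q-1)/2` orbits on `P`: the `(q-1)/4`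
singleton orbits `{[(a,0)]}` with `a ≠ 0`, and the `(q-1)/4` orbits
`{[(y,b)] : y ∈ F_q}` with `b ≠ 0`. -/
theorem stmt_6 (q : ℕ) (F : Type) [Field F] [Fintype F]
    (hcard : Fintype.card F = q) (hq : q % 4 = 1)
    (i : F) (hi : i ^ 2 = -1) :
    (∀ a : F, ∀ ha : a ≠ 0,
      MulAction.orbit (↥(MulAction.stabilizer (SL2 F) (mkPt F i ![1, 0] (vec_fst_ne_zero 0))))
          (mkPt F i ![a, 0] (fun h => ha (by simpa using congrFun h 0))) =
        {mkPt F i ![a, 0] (fun h => ha (by simpa using congrFun h 0))}) ∧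
    (∀ a b : F, ∀ hb : b ≠ 0,
      MulAction.orbit (↥(MulAction.stabilizer (SL2 F) (mkPt F i ![1, 0] (vec_fst_ne_zero 0))))
          (mkPt F i ![a, b] (fun h => hb (by simpa using congrFun h 1))) =
        {x : Pts F i | ∃ y : F, x = mkPt F i ![y, b] (fun h => hb (by simpa using congrFun h 1))}) ∧
    Nat.card {s : Set (Pts F i) | ∃ a : F, ∃ ha : a ≠ 0,
      s = MulAction.orbit (↥(MulAction.stabilizer (SL2 F) (mkPt F i ![1, 0] (vec_fst_ne_zero 0))))
        (mkPt F i ![a, 0] (fun h => ha (by simpa using congrFun h 0)))} = (q - 1) / 4 ∧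
    Nat.card {s : Set (Pts F i) | ∃ a b : F, ∃ hb : b ≠ 0,
      s = MulAction.orbit (↥(MulAction.stabilizer (SL2 F) (mkPt F i ![1, 0] (vec_fst_ne_zero 0))))
        (mkPt F i ![a, b] (fun h => hb (by simpa using congrFun h 1)))} = (q - 1) / 4 ∧
    Nat.card {s : Set (Pts F i) | ∃ x : Pts F i,
      s = MulAction.orbit (↥(MulAction.stabilizer (SL2 F) (mkPt F i ![1, 0] (vec_fst_ne_zero 0)))) x} = (q - 1) / 2 := by
  classical
  haveI : Finite (Vec F) := by unfold Vec; infer_instance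
  haveI : Finite (Pts F i) := by unfold Pts; infer_instance
  have hodd : ringChar F ≠ 2 := by
    intro h
    have h2 := FiniteField.even_card_iff_char_two.mp h
    rw [hcard] at h2
    omega
  have hn1 : (-1 : F) ≠ 1 := Ring.neg_one_ne_one_of_char_ne_two hodd
  set iu : Fˣ := Units.mk0 i (i_ne_zero hi) with hiudef
  have hiuval : (iu : F) = i := rfl
  have hiu2 : iu ^ 2 = -1 := by
    ext
    rw [Units.val_pow_eq_pow_val, hiuval, hi]
    simp
  have hiu4 : iu ^ 4 = 1 := by
    ext
    rw [Units.val_pow_eq_pow_val, hiuval, hi4 hi]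
    simp
  have hord : orderOf iu = 4 := by
    have h4 : (4 : ℕ) = 2 ^ (1 + 1) := by norm_num
    rw [h4]
    refine orderOf_eq_prime_pow ?_ ?_
    · rw [pow_one, hiu2]
      intro h
      apply hn1
      have := congrArg Units.val h
      simpa using this
    · rw [← h4]; exact hiu4
  have hzp : ∀ u u' : Fˣ, u⁻¹ * u' ∈ Subgroup.zpowers iu ↔ ∃ n : ℕ, (u' : F) = i ^ n * u := by
    intro u u'
    rw [← mem_powers_iff_mem_zpowers, Submonoid.mem_powers_iff]
    constructor
    · rintro ⟨n, hn⟩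
      refine ⟨n, ?_⟩
      have hv := congrArg Units.val hn
      rw [Units.val_pow_eq_pow_val, hiuval, Units.val_mul, Units.val_inv_eq_inv_val] at hv
      field_simp at hv
      rw [← hv]
    · rintro ⟨n, hn⟩
      refine ⟨n, ?_⟩
      ext
      rw [Units.val_pow_eq_pow_val, hiuval, Units.val_mul, Units.val_inv_eq_inv_val, hn]
      field_simp
  have hindex : (Subgroup.zpowers iu).index = (q - 1) / 4 := by
    have h1 := Subgroup.card_mul_index (Subgroup.zpowers iu)
    rw [Nat.card_zpowers, hord] at h1
    have h2 : Nat.card Fˣ = q - 1 := by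
      rw [Nat.card_eq_fintype_card, Fintype.card_units, hcard]
    rw [h2] at h1
    omega
  -- the two families of sets
  have hnz1 : ∀ u : Fˣ, ![(u : F), 0] ≠ 0 := fun u h => u.ne_zero (by simpa using congrFun h 0)
  have hnz2 : ∀ (y : F) (u : Fˣ), ![y, (u : F)] ≠ 0 :=
    fun y u h => u.ne_zero (by simpa using congrFun h 1)
  set f1 : Fˣ → Set (Pts F i) := fun u => {mkPt F i ![(u : F), 0] (hnz1 u)} with hf1def
  set f2 : Fˣ → Set (Pts F i) :=
    fun u => {x : Pts F i | ∃ y : F, x = mkPt F i ![y, (u : F)] (hnz2 y u)} with hf2def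
  have hf1 : ∀ u u' : Fˣ, f1 u = f1 u' ↔ u⁻¹ * u' ∈ Subgroup.zpowers iu := by
    intro u u'
    rw [hzp, hf1def]
    simp only [Set.singleton_eq_singleton_iff]
    rw [mkPt_eq_iff hi]
    constructor
    · rintro ⟨n, hn⟩
      rw [smul_pair, pair_eq_iff] at hn
      exact ⟨n, hn.1⟩
    · rintro ⟨n, hn⟩
      refine ⟨n, ?_⟩
      rw [smul_pair, pair_eq_iff]
      exact ⟨hn, by ring⟩
  have hsub2 : ∀ (u u' : Fˣ) (n : ℕ), (u' : F) = i ^ n * u → f2 u ⊆ f2 u' := by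
    intro u u' n hn x hx
    obtain ⟨y, rfl⟩ := hx
    refine ⟨i ^ n * y, ?_⟩
    rw [mkPt_eq_iff hi]
    refine ⟨n, ?_⟩
    rw [smul_pair, pair_eq_iff]
    exact ⟨rfl, hn⟩
  have hf2 : ∀ u u' : Fˣ, f2 u = f2 u' ↔ u⁻¹ * u' ∈ Subgroup.zpowers iu := by
    intro u u'
    rw [hzp]
    constructor
    · intro h
      have hm : mkPt F i ![0, (u : F)] (hnz2 0 u) ∈ f2 u' := by
        rw [← h]; exact ⟨0, rfl⟩
      obtain ⟨y, hy⟩ := hm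
      rw [mkPt_eq_iff hi] at hy
      obtain ⟨n, hn⟩ := hy
      rw [smul_pair, pair_eq_iff] at hn
      exact ⟨n, by rw [hn.2]⟩
    · rintro ⟨n, hn⟩
      have hn' : (u : F) = i ^ (3 * n) * u' := by
        rw [hn, ← mul_assoc, ← pow_add, show 3 * n + n = 4 * n from by ring, pow_mul,
          hi4 hi, one_pow, one_mul]
      exact Set.Subset.antisymm (hsub2 u u' n hn) (hsub2 u' u (3 * n) hn')
  -- part 1 and part 2
  have part1 : ∀ a : F, ∀ ha : a ≠ 0,
      MulAction.orbit (↥(MulAction.stabilizer (SL2 F) (mkPt F i ![1, 0] (vec_fst_ne_zero 0))))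
          (mkPt F i ![a, 0] (fun h => ha (by simpa using congrFun h 0))) =
        {mkPt F i ![a, 0] (fun h => ha (by simpa using congrFun h 0))} :=
    fun a ha => orbit_zero hi a ha _
  have part2 : ∀ a b : F, ∀ hb : b ≠ 0,
      MulAction.orbit (↥(MulAction.stabilizer (SL2 F) (mkPt F i ![1, 0] (vec_fst_ne_zero 0))))
          (mkPt F i ![a, b] (fun h => hb (by simpa using congrFun h 1))) =
        {x : Pts F i | ∃ y : F,
          x = mkPt F i ![y, b] (fun h => hb (by simpa using congrFun h 1))} :=
    fun a b hb => orbit_line hi a b hb _ _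
  -- the three set equalities
  have hS1 : {s : Set (Pts F i) | ∃ a : F, ∃ ha : a ≠ 0,
      s = MulAction.orbit (↥(MulAction.stabilizer (SL2 F) (mkPt F i ![1, 0] (vec_fst_ne_zero 0))))
        (mkPt F i ![a, 0] (fun h => ha (by simpa using congrFun h 0)))} = Set.range f1 := by
    ext s
    constructor
    · rintro ⟨a, ha, rfl⟩
      exact ⟨Units.mk0 a ha, (orbit_zero hi a ha _).symm⟩
    · rintro ⟨u, rfl⟩
      exact ⟨(u : F), u.ne_zero, (orbit_zero hi (u : F) u.ne_zero _).symm⟩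
  have hS2 : {s : Set (Pts F i) | ∃ a b : F, ∃ hb : b ≠ 0,
      s = MulAction.orbit (↥(MulAction.stabilizer (SL2 F) (mkPt F i ![1, 0] (vec_fst_ne_zero 0))))
        (mkPt F i ![a, b] (fun h => hb (by simpa using congrFun h 1)))} = Set.range f2 := by
    ext s
    constructor
    · rintro ⟨a, b, hb, rfl⟩
      refine ⟨Units.mk0 b hb, ?_⟩
      rw [orbit_line hi a b hb _ (fun y h => hb (by simpa using congrFun h 1))]
      rfl
    · rintro ⟨u, rfl⟩
      refine ⟨0, (u : F), u.ne_zero, ?_⟩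
      rw [orbit_line hi 0 (u : F) u.ne_zero _ (fun y h => u.ne_zero (by simpa using congrFun h 1))]
  have hc1 : Nat.card {s : Set (Pts F i) | ∃ a : F, ∃ ha : a ≠ 0,
      s = MulAction.orbit (↥(MulAction.stabilizer (SL2 F) (mkPt F i ![1, 0] (vec_fst_ne_zero 0))))
        (mkPt F i ![a, 0] (fun h => ha (by simpa using congrFun h 0)))} = (q - 1) / 4 := by
    rw [hS1, card_range_eq_index (Subgroup.zpowers iu) f1 hf1, hindex]
  have hc2 : Nat.card {s : Set (Pts F i) | ∃ a b : F, ∃ hb : b ≠ 0,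
      s = MulAction.orbit (↥(MulAction.stabilizer (SL2 F) (mkPt F i ![1, 0] (vec_fst_ne_zero 0))))
        (mkPt F i ![a, b] (fun h => hb (by simpa using congrFun h 1)))} = (q - 1) / 4 := by
    rw [hS2, card_range_eq_index (Subgroup.zpowers iu) f2 hf2, hindex]
  refine ⟨part1, part2, hc1, hc2, ?_⟩
  -- total count
  have hS3 : {s : Set (Pts F i) | ∃ x : Pts F i,
      s = MulAction.orbit
        (↥(MulAction.stabilizer (SL2 F) (mkPt F i ![1, 0] (vec_fst_ne_zero 0)))) x} =
      Set.range f1 ∪ Set.range f2 := by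
    rw [← hS1, ← hS2]
    ext s
    constructor
    · rintro ⟨x, rfl⟩
      obtain ⟨⟨v, hv⟩, rfl⟩ := Quot.exists_rep x
      by_cases h1 : v 1 = 0
      · have h0 : v 0 ≠ 0 := by
          intro h0
          apply hv
          funext j
          fin_cases j
          · exact h0
          · exact h1
        left
        refine ⟨v 0, h0, ?_⟩
        have heq : mkPt F i v hv = mkPt F i ![v 0, 0]
            (fun h => h0 (by simpa using congrFun h 0)) := by
          rw [mkPt_eq_iff hi]
          refine ⟨0, ?_⟩
          rw [pow_zero, one_smul]
          funext j
          fin_cases j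
          · rfl
          · exact h1.symm
        exact congrArg _ heq
      · right
        refine ⟨v 0, v 1, h1, ?_⟩
        have heq : mkPt F i v hv = mkPt F i ![v 0, v 1]
            (fun h => h1 (by simpa using congrFun h 1)) := by
          rw [mkPt_eq_iff hi]
          refine ⟨0, ?_⟩
          rw [pow_zero, one_smul]
          funext j
          fin_cases j <;> rfl
        exact congrArg _ heq
    · rintro (⟨a, ha, rfl⟩ | ⟨a, b, hb, rfl⟩)
      · exact ⟨_, rfl⟩
      · exact ⟨_, rfl⟩
  have hdisj : Disjoint (Set.range f1) (Set.range f2) := by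
    rw [Set.disjoint_left]
    rintro s ⟨u, rfl⟩ ⟨w, heq⟩
    have hm : mkPt F i ![(u : F), 0] (hnz1 u) ∈ f1 u := rfl
    rw [← heq] at hm
    obtain ⟨y, hy⟩ := hm
    rw [mkPt_eq_iff hi] at hy
    obtain ⟨n, hn⟩ := hy
    rw [smul_pair, pair_eq_iff] at hn
    exact w.ne_zero (by rw [hn.2]; ring)
  rw [hS3, Nat.card_coe_set_eq, Set.ncard_union_eq hdisj (Set.toFinite _) (Set.toFinite _),
    ← Nat.card_coe_set_eq, ← Nat.card_coe_set_eq,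
    card_range_eq_index (Subgroup.zpowers iu) f1 hf1,
    card_range_eq_index (Subgroup.zpowers iu) f2 hf2, hindex]
  omega
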